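/- Let μ be a finite signed measure on a finite product of measurable spaces (∏_{j=1}^p Ω_j, ⊗ 𝒜_j) equipped with product probability measures P_j. Then there exists a unique family (μ_H)_{H ⊆ {1,...,p}} of finite signed measures, μ_H on ∏_{j∈H} Ω_j, each with all marginals zero (μ_H(∏_{j∈H} A_j) = 0 whenever A_j = Ω_j for some j ∈ H), such that for all measurable rectangles, μ(∏_j A_j) = ∑_{H⊆J} (∏_{j∉H} P_j(A_j)) · μ_H(∏_{j∈H} A_j). -/

import Mathlib

open MeasureTheory

set_option linter.unusedSectionVars false

lemma vm_finset_sum_apply {α M : Type*} [MeasurableSpace α] [AddCommMonoid M]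
    [TopologicalSpace M] [ContinuousAdd M] {ι : Type*} (s : Finset ι)
    (f : ι → VectorMeasure α M) (t : Set α) :
    (∑ i ∈ s, f i) t = ∑ i ∈ s, f i t := by
  classical
  induction s using Finset.cons_induction with
  | empty => simp
  | cons a s ha ih => rw [Finset.sum_cons, Finset.sum_cons, VectorMeasure.add_apply, ih]

lemma signed_apply_jordan {α : Type*} [MeasurableSpace α] (μ : SignedMeasure α)
    {s : Set α} (hs : MeasurableSet s) :
    μ s = (μ.toJordanDecomposition.posPart s).toReal
        - (μ.toJordanDecomposition.negPart s).toReal := by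
  conv_lhs => rw [← μ.toSignedMeasure_toJordanDecomposition]
  rw [JordanDecomposition.toSignedMeasure, VectorMeasure.sub_apply,
    Measure.toSignedMeasure_apply_measurable hs, Measure.toSignedMeasure_apply_measurable hs]
  rfl

namespace ZMD
variable {p : ℕ} {Ωj : Fin p → Type*} [∀ j, MeasurableSpace (Ωj j)]

/-- cylinder set -/
def cyl (G : Finset (Fin p)) (A : ∀ j, Set (Ωj j)) : Set (∀ j, Ωj j) :=
  Set.univ.pi fun j => if j ∈ G then A j else Set.univ

lemma measurableSet_cyl (G : Finset (Fin p)) {A : ∀ j, Set (Ωj j)}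
    (hA : ∀ j, MeasurableSet (A j)) : MeasurableSet (cyl G A) := by
  apply MeasurableSet.univ_pi
  intro j; by_cases h : j ∈ G <;> simp [h, hA j]

lemma mem_cyl {G : Finset (Fin p)} {A : ∀ j, Set (Ωj j)} {x : ∀ j, Ωj j} :
    x ∈ cyl G A ↔ ∀ j ∈ G, x j ∈ A j := by
  simp only [cyl, Set.mem_pi, Set.mem_univ, true_imp_iff]
  constructor
  · intro h j hj; have := h j; rwa [if_pos hj] at this
  · intro h j; by_cases hj : j ∈ G
    · rw [if_pos hj]; exact h j hj
    · rw [if_neg hj]; trivial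

/-- the recombination map -/
def ψ (G H : Finset (Fin p)) : (∀ j, Ωj j) × (∀ j, Ωj j) → (∀ j : H, Ωj j) :=
  fun z j => if (j : Fin p) ∈ G then z.1 j else z.2 j

lemma measurable_ψ (G H : Finset (Fin p)) : Measurable (ψ (Ωj := Ωj) G H) := by
  apply measurable_pi_lambda
  intro j
  by_cases h : (j : Fin p) ∈ G
  · simp only [ψ, if_pos h]; exact (measurable_pi_apply _).comp measurable_fst
  · simp only [ψ, if_neg h]; exact (measurable_pi_apply _).comp measurable_snd

lemma ψ_preimage (G H : Finset (Fin p)) (hGH : G ⊆ H) (A : ∀ j, Set (Ωj j)) :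
    ψ (Ωj := Ωj) G H ⁻¹' (Set.univ.pi fun j : H => A j) = cyl G A ×ˢ cyl (H \ G) A := by
  ext ⟨z1, z2⟩
  simp only [Set.mem_preimage, Set.mem_pi, Set.mem_univ, true_imp_iff, Set.mem_prod, mem_cyl,
    Finset.mem_sdiff, ψ]
  constructor
  · intro h
    constructor
    · intro j hj
      have := h ⟨j, hGH hj⟩; rwa [if_pos hj] at this
    · rintro j ⟨hjH, hjG⟩
      have := h ⟨j, hjH⟩; rwa [if_neg hjG] at this
  · rintro ⟨h1, h2⟩ j
    by_cases hj : (j : Fin p) ∈ G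
    · rw [if_pos hj]; exact h1 j hj
    · rw [if_neg hj]; exact h2 j ⟨j.2, hj⟩

variable (P : ∀ j, Measure (Ωj j)) [∀ j, IsProbabilityMeasure (P j)]

/-- resample coordinates outside `G` by `P`, then project to coordinates `H`. -/
noncomputable def M (κ : Measure (∀ j, Ωj j)) (G H : Finset (Fin p)) :
    Measure (∀ j : H, Ωj j) :=
  (κ.prod (Measure.pi P)).map (ψ G H)

instance (κ : Measure (∀ j, Ωj j)) [IsFiniteMeasure κ] (G H : Finset (Fin p)) :
    IsFiniteMeasure (M P κ G H) := by
  unfold M; infer_instance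

lemma Q_cyl {A : ∀ j, Set (Ωj j)} (hA : ∀ j, MeasurableSet (A j)) (S : Finset (Fin p)) :
    Measure.pi P (cyl S A) = ∏ j ∈ S, P j (A j) := by
  rw [cyl, Measure.pi_pi]
  have h : ∀ i, P i (if i ∈ S then A i else Set.univ) = if i ∈ S then P i (A i) else 1 := by
    intro i; split <;> simp
  simp_rw [h, Finset.prod_ite_mem, Finset.univ_inter]

lemma M_rect (κ : Measure (∀ j, Ωj j)) [IsFiniteMeasure κ] {G H : Finset (Fin p)}
    (hGH : G ⊆ H) {A : ∀ j, Set (Ωj j)} (hA : ∀ j, MeasurableSet (A j)) :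
    M P κ G H (Set.univ.pi fun j : H => A j) = κ (cyl G A) * ∏ j ∈ H \ G, P j (A j) := by
  rw [M, Measure.map_apply (measurable_ψ G H)
    (MeasurableSet.univ_pi fun j : H => hA j), ψ_preimage G H hGH,
    Measure.prod_prod, Q_cyl P hA]


noncomputable def nu (μ : SignedMeasure (∀ j, Ωj j)) (H : Finset (Fin p)) :
    SignedMeasure (∀ j : H, Ωj j) :=
  ∑ G ∈ H.powerset, ((-1 : ℝ) ^ (H \ G).card) •
    ((M P μ.toJordanDecomposition.posPart G H).toSignedMeasure -
     (M P μ.toJordanDecomposition.negPart G H).toSignedMeasure)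

lemma nu_rect (μ : SignedMeasure (∀ j, Ωj j)) (H : Finset (Fin p))
    {A : ∀ j, Set (Ωj j)} (hA : ∀ j, MeasurableSet (A j)) :
    nu P μ H (Set.univ.pi fun j : H => A j)
      = ∑ G ∈ H.powerset, (-1 : ℝ) ^ (H \ G).card
          * (μ (cyl G A) * ∏ j ∈ H \ G, (P j (A j)).toReal) := by
  have hrect : MeasurableSet (Set.univ.pi fun j : H => A j) :=
    MeasurableSet.univ_pi fun j : H => hA j
  rw [nu, vm_finset_sum_apply]
  refine Finset.sum_congr rfl fun G hG => ?_
  rw [Finset.mem_powerset] at hG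
  rw [VectorMeasure.smul_apply, VectorMeasure.sub_apply,
    Measure.toSignedMeasure_apply_measurable hrect,
    Measure.toSignedMeasure_apply_measurable hrect,
    measureReal_def, measureReal_def,
    M_rect P _ hG hA, M_rect P _ hG hA,
    signed_apply_jordan μ (measurableSet_cyl G hA),
    ENNReal.toReal_mul, ENNReal.toReal_mul, ENNReal.toReal_prod, smul_eq_mul]
  ring


lemma cancel_sum {f : Finset (Fin p) → ℝ} {H : Finset (Fin p)} {j0 : Fin p} (hj0 : j0 ∈ H)
    (hf : ∀ G ∈ (H.erase j0).powerset, f (insert j0 G) = - f G) :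
    ∑ G ∈ H.powerset, f G = 0 := by
  conv_lhs => rw [← Finset.insert_erase hj0]
  rw [Finset.sum_powerset_insert (Finset.notMem_erase j0 H), Finset.sum_congr rfl hf,
    Finset.sum_neg_distrib, add_neg_cancel]

lemma cyl_insert_of_univ {A : ∀ j, Set (Ωj j)} {j0 : Fin p} (h : A j0 = Set.univ)
    (G : Finset (Fin p)) : cyl (insert j0 G) A = cyl (Ωj := Ωj) G A := by
  ext x
  simp [mem_cyl, Finset.forall_mem_insert, h]

lemma nu_zero_marginal (μ : SignedMeasure (∀ j, Ωj j)) (H : Finset (Fin p))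
    {A : ∀ j, Set (Ωj j)} (hA : ∀ j, MeasurableSet (A j))
    (hex : ∃ j ∈ H, A j = Set.univ) :
    nu P μ H (Set.univ.pi fun j : H => A j) = 0 := by
  obtain ⟨j0, hj0H, hAj0⟩ := hex
  rw [nu_rect P μ H hA]
  apply cancel_sum hj0H
  intro G hG
  rw [Finset.mem_powerset] at hG
  have hj0G : j0 ∉ G := fun h => Finset.notMem_erase j0 H (hG h)
  have hj0HG : j0 ∈ H \ G := Finset.mem_sdiff.2 ⟨hj0H, hj0G⟩
  have h1 : H \ insert j0 G = (H \ G).erase j0 := Finset.sdiff_insert H G j0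
  have h2 : ∏ j ∈ (H \ G).erase j0, (P j (A j)).toReal = ∏ j ∈ H \ G, (P j (A j)).toReal :=
    Finset.prod_erase _ (by simp [hAj0])
  have h3 : ((H \ G).erase j0).card + 1 = (H \ G).card := Finset.card_erase_add_one hj0HG
  rw [cyl_insert_of_univ hAj0, h1, h2, ← h3, pow_succ]
  ring

lemma cyl_univ (A : ∀ j, Set (Ωj j)) : cyl (Ωj := Ωj) Finset.univ A = Set.univ.pi A := by
  ext x; simp [mem_cyl, Set.mem_pi]

lemma nu_decomp (μ : SignedMeasure (∀ j, Ωj j))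
    {A : ∀ j, Set (Ωj j)} (hA : ∀ j, MeasurableSet (A j)) :
    μ (Set.univ.pi A) =
      ∑ H : Finset (Fin p),
        (∏ j ∈ Hᶜ, (P j (A j)).toReal) * nu P μ H (Set.univ.pi fun j : H => A j) := by
  classical
  have h1 : (∑ H : Finset (Fin p),
        (∏ j ∈ Hᶜ, (P j (A j)).toReal) * nu P μ H (Set.univ.pi fun j : H => A j))
      = ∑ H : Finset (Fin p), ∑ G ∈ H.powerset,
        (∏ j ∈ Hᶜ, (P j (A j)).toReal) *
          ((-1 : ℝ) ^ (H \ G).card * (μ (cyl G A) * ∏ j ∈ H \ G, (P j (A j)).toReal)) :=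
    Finset.sum_congr rfl fun H _ => by rw [nu_rect P μ H hA, Finset.mul_sum]
  rw [h1]
  rw [Finset.sum_comm' (s' := fun G => Finset.univ.filter fun H => G ⊆ H)
    (t' := Finset.univ) (f := fun H G => (∏ j ∈ Hᶜ, (P j (A j)).toReal) *
      ((-1 : ℝ) ^ (H \ G).card * (μ (cyl G A) * ∏ j ∈ H \ G, (P j (A j)).toReal)))
    (by intro H G; simp [Finset.mem_powerset])]
  have hinner : ∀ G : Finset (Fin p),
      (∑ H ∈ Finset.univ.filter fun H => G ⊆ H, (∏ j ∈ Hᶜ, (P j (A j)).toReal) *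
        ((-1 : ℝ) ^ (H \ G).card * (μ (cyl G A) * ∏ j ∈ H \ G, (P j (A j)).toReal)))
      = (μ (cyl G A) * ∏ j ∈ Gᶜ, (P j (A j)).toReal) * (if Gᶜ = ∅ then (1:ℝ) else 0) := by
    intro G
    have step1 : ∀ H ∈ Finset.univ.filter fun H => G ⊆ H,
        (∏ j ∈ Hᶜ, (P j (A j)).toReal) * ((-1 : ℝ) ^ (H \ G).card * (μ (cyl G A) * ∏ j ∈ H \ G, (P j (A j)).toReal))
        = (μ (cyl G A) * ∏ j ∈ Gᶜ, (P j (A j)).toReal) * (-1 : ℝ) ^ (H \ G).card := by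
      intro H hH
      rw [Finset.mem_filter] at hH
      have hdisj : Disjoint Hᶜ (H \ G) :=
        Finset.disjoint_left.2 fun j hj hj2 => (Finset.mem_compl.1 hj) (Finset.mem_sdiff.1 hj2).1
      have hun : Hᶜ ∪ (H \ G) = Gᶜ := by
        ext j
        simp only [Finset.mem_union, Finset.mem_compl, Finset.mem_sdiff]
        constructor
        · rintro (h | ⟨_, h⟩) hG2 <;> [exact h (hH.2 hG2); exact h hG2]
        · intro h
          by_cases hj : j ∈ H
          · exact Or.inr ⟨hj, h⟩
          · exact Or.inl hj
      have : (∏ j ∈ Hᶜ, (P j (A j)).toReal) * ∏ j ∈ H \ G, (P j (A j)).toReal = ∏ j ∈ Gᶜ, (P j (A j)).toReal := by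
        rw [← Finset.prod_union hdisj, hun]
      calc (∏ j ∈ Hᶜ, (P j (A j)).toReal) * ((-1 : ℝ) ^ (H \ G).card * (μ (cyl G A) * ∏ j ∈ H \ G, (P j (A j)).toReal))
          = ((∏ j ∈ Hᶜ, (P j (A j)).toReal) * ∏ j ∈ H \ G, (P j (A j)).toReal) * μ (cyl G A) * (-1 : ℝ) ^ (H \ G).card := by
            ring
        _ = (μ (cyl G A) * ∏ j ∈ Gᶜ, (P j (A j)).toReal) * (-1 : ℝ) ^ (H \ G).card := by rw [this]; ring
    rw [Finset.sum_congr rfl step1, ← Finset.mul_sum]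
    congr 1
    refine Eq.trans (Finset.sum_nbij' (t := Gᶜ.powerset) (g := fun K => (-1 : ℝ) ^ K.card)
        (i := fun H => H \ G) (j := fun K => G ∪ K) ?_ ?_ ?_ ?_ ?_)
      (by
        have h := Finset.sum_powerset_neg_one_pow_card (x := Gᶜ)
        apply_fun (Int.cast : ℤ → ℝ) at h
        push_cast at h
        simpa using h)
    · intro H hH
      rw [Finset.mem_filter] at hH
      rw [Finset.mem_powerset]
      intro j hj
      rw [Finset.mem_sdiff] at hj
      exact Finset.mem_compl.2 hj.2
    · intro K hK
      simp only [Finset.mem_filter, Finset.mem_univ, true_and]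
      exact Finset.subset_union_left
    · intro H hH
      rw [Finset.mem_filter] at hH
      exact Finset.union_sdiff_of_subset hH.2
    · intro K hK
      rw [Finset.mem_powerset] at hK
      exact Finset.union_sdiff_cancel_left
        (Finset.disjoint_left.2 fun j hjG hjK => Finset.mem_compl.1 (hK hjK) hjG)
    · intro H hH; rfl
  rw [Finset.sum_congr rfl fun G _ => hinner G, Finset.sum_eq_single Finset.univ]
  · rw [cyl_univ]; simp
  · intro G _ hG
    rw [if_neg (fun h => hG ((Finset.compl_eq_empty_iff G).1 h)), mul_zero]
  · intro h; exact absurd (Finset.mem_univ _) h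


lemma signed_ext_pi {α : Type*} [m : MeasurableSpace α] {S : Set (Set α)}
    (hgen : MeasurableSpace.generateFrom S = m) (hpi : IsPiSystem S)
    (huniv : Set.univ ∈ S) {ν1 ν2 : SignedMeasure α}
    (h : ∀ s ∈ S, ν1 s = ν2 s) : ν1 = ν2 := by
  set p1 := ν1.toJordanDecomposition.posPart with hp1
  set n1 := ν1.toJordanDecomposition.negPart with hn1
  set p2 := ν2.toJordanDecomposition.posPart with hp2
  set n2 := ν2.toJordanDecomposition.negPart with hn2
  have step : ∀ s, MeasurableSet s → ν1 s = ν2 s → (p1 + n2) s = (p2 + n1) s := by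
    intro s hms hs
    have e1 := signed_apply_jordan ν1 hms
    have e2 := signed_apply_jordan ν2 hms
    have htr : ((p1 + n2) s).toReal = ((p2 + n1) s).toReal := by
      rw [Measure.add_apply, Measure.add_apply,
        ENNReal.toReal_add (measure_ne_top _ _) (measure_ne_top _ _),
        ENNReal.toReal_add (measure_ne_top _ _) (measure_ne_top _ _)]
      rw [e1, e2] at hs
      linarith
    exact (ENNReal.toReal_eq_toReal_iff' (measure_ne_top _ _) (measure_ne_top _ _)).1 htr
  have key : p1 + n2 = p2 + n1 := by
    refine ext_of_generate_finite S hgen.symm hpi ?_ ?_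
    · intro s hs
      exact step s (hgen ▸ MeasurableSpace.measurableSet_generateFrom hs) (h s hs)
    · exact step Set.univ MeasurableSet.univ (h Set.univ huniv)
  ext s hs
  have hk : (p1 + n2) s = (p2 + n1) s := by rw [key]
  rw [Measure.add_apply, Measure.add_apply] at hk
  have htr := congrArg ENNReal.toReal hk
  rw [ENNReal.toReal_add (measure_ne_top _ _) (measure_ne_top _ _),
    ENNReal.toReal_add (measure_ne_top _ _) (measure_ne_top _ _)] at htr
  rw [signed_apply_jordan ν1 hs, signed_apply_jordan ν2 hs]
  linarith

end ZMD

/-- unique decomposition of a finite signed measure on a product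
    probability space into zero-marginal components indexed by subsets H of {1,...,p}. -/
theorem signed_measure_zero_marginal_decomposition
    (p : ℕ) (Ωj : Fin p → Type*) [∀ j, MeasurableSpace (Ωj j)]
    (P : ∀ j, Measure (Ωj j)) [∀ j, IsProbabilityMeasure (P j)]
    (μ : SignedMeasure (∀ j, Ωj j)) :
    ∃! ν : ∀ H : Finset (Fin p), SignedMeasure (∀ j : H, Ωj j),
      (∀ H : Finset (Fin p), ∀ A : ∀ j, Set (Ωj j), (∀ j, MeasurableSet (A j)) →
        (∃ j ∈ H, A j = Set.univ) →
        ν H (Set.univ.pi fun j : H => A j) = 0) ∧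
      (∀ A : ∀ j, Set (Ωj j), (∀ j, MeasurableSet (A j)) →
        μ (Set.univ.pi A) =
          ∑ H : Finset (Fin p),
            (∏ j ∈ Hᶜ, (P j (A j)).toReal) * ν H (Set.univ.pi fun j : H => A j)) := by
  classical
  refine ⟨fun H => ZMD.nu P μ H, ⟨?_, ?_⟩, ?_⟩
  · intro H A hA hex
    exact ZMD.nu_zero_marginal P μ H hA hex
  · intro A hA
    exact ZMD.nu_decomp P μ hA
  · rintro ν' ⟨hzm, hdec⟩
    have main : ∀ n (H : Finset (Fin p)), H.card = n → ∀ A : ∀ j, Set (Ωj j),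
        (∀ j, MeasurableSet (A j)) →
        ν' H (Set.univ.pi fun j : H => A j) = ZMD.nu P μ H (Set.univ.pi fun j : H => A j) := by
      intro n
      induction n using Nat.strong_induction_on with
      | _ n ih =>
        intro H hcard A hA
        set A' : ∀ j, Set (Ωj j) := fun j => if j ∈ H then A j else Set.univ with hA'def
        have hA' : ∀ j, MeasurableSet (A' j) := fun j => by
          by_cases h : j ∈ H <;> simp [A', h, hA j]
        have hrestr : ∀ H' : Finset (Fin p), H' ⊆ H →
            (Set.univ.pi fun j : H' => A' j) = Set.univ.pi fun j : H' => A j := by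
          intro H' hH'
          exact congrArg Set.univ.pi (funext fun j => by simp [A', hH' j.2])
        have hsum := (ZMD.nu_decomp P μ hA').symm.trans (hdec A' hA')
        rw [← Finset.sum_erase_add _ _ (Finset.mem_univ H),
          ← Finset.sum_erase_add _ _ (Finset.mem_univ H)] at hsum
        have hterm : ∀ H' ∈ Finset.univ.erase H,
            (∏ j ∈ H'ᶜ, (P j (A' j)).toReal) * ZMD.nu P μ H' (Set.univ.pi fun j : H' => A' j)
            = (∏ j ∈ H'ᶜ, (P j (A' j)).toReal) * ν' H' (Set.univ.pi fun j : H' => A' j) := by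
          intro H' hH'
          have hne : H' ≠ H := (Finset.mem_erase.1 hH').1
          by_cases hsub : H' ⊆ H
          · have hlt : H'.card < n := hcard ▸ Finset.card_lt_card ⟨hsub, fun h => hne (Finset.Subset.antisymm hsub h)⟩
            rw [ih H'.card hlt H' rfl A' hA']
          · obtain ⟨j0, hj0H', hj0H⟩ := Finset.not_subset.1 hsub
            have hx : ∃ j ∈ H', A' j = Set.univ := ⟨j0, hj0H', by simp [A', hj0H]⟩
            rw [ZMD.nu_zero_marginal P μ H' hA' hx, hzm H' A' hA' hx]
        rw [Finset.sum_congr rfl hterm] at hsum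
        have hEq := add_left_cancel hsum
        have hone : (∏ j ∈ Hᶜ, (P j (A' j)).toReal) = 1 := by
          apply Finset.prod_eq_one
          intro j hj
          simp [A', Finset.mem_compl.1 hj]
        rw [hone, one_mul, one_mul, hrestr H (le_refl H)] at hEq
        exact hEq.symm
    funext H
    refine ZMD.signed_ext_pi generateFrom_pi isPiSystem_pi ?_ ?_
    · exact ⟨fun _ => Set.univ, fun i _ => MeasurableSet.univ, by simp⟩
    · rintro s ⟨t, ht, rfl⟩
      set A : ∀ j, Set (Ωj j) := fun j => if h : j ∈ H then t ⟨j, h⟩ else Set.univ with hAdef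
      have hA : ∀ j, MeasurableSet (A j) := by
        intro j
        by_cases h : j ∈ H
        · simpa [A, h] using ht ⟨j, h⟩ (Set.mem_univ _)
        · simp [A, h]
      have hAt : (fun j : H => A j) = t := by
        funext j
        simp only [A, dif_pos j.2]
      rw [← hAt]
      exact main H.card H rfl A hA
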